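/- Let N ≥ 2, assume (A), (Q), that f satisfies (f0) and (f3) with constant τ ∈ (1-2/N, 1), and let μ ∈ (0,μ₀). Suppose u ∈ E_rad is a nonnegative weak solution of the approximating Choquard equation, i.e. ∫_{ℝ^N} A(|x|)|∇u|^{N-2}∇u·∇φ dx = C_N ∬ G_μ(x-y) Q(|y|)F(u(y)) Q(|x|) f(u(x)) φ(x) dy dx for all φ ∈ E, and assume the function equal to F(u)/f(u) on {u > 0} and to 0 elsewhere belongs to E. Then (τ - 1 + 2/N) ‖u‖^N ≤ 2 J_μ(u). -/

import Mathlib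

open MeasureTheory Real Filter
open scoped Topology ENNReal RealInnerProductSpace

noncomputable section

/-- Euclidean space `ℝ^N`. -/
abbrev Rn (N : ℕ) := EuclideanSpace ℝ (Fin N)

/-- The constant `C_N = (2^{N-1} π^{N/2} Γ(N/2))⁻¹`. -/
def CN (N : ℕ) : ℝ :=
  ((2:ℝ) ^ (N - 1) * Real.pi ^ ((N:ℝ)/2) * Real.Gamma ((N:ℝ)/2))⁻¹

/-- Surface measure `ω_{N-1}` of the unit sphere in `ℝ^N`, i.e. `N · |B₁|`. -/
def omegaS (N : ℕ) : ℝ := (N : ℝ) * (volume (Metric.ball (0 : Rn N) 1)).toReal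

/-- Radial symmetry. -/
def IsRadial {N : ℕ} (u : Rn N → ℝ) : Prop := ∀ x y : Rn N, ‖x‖ = ‖y‖ → u x = u y

/-- Membership in the space `E`. -/
def memE (N : ℕ) (A : ℝ → ℝ) (u : Rn N → ℝ) : Prop :=
  MeasureTheory.LocallyIntegrable (fun x : Rn N => |u x| ^ N) volume ∧
  MeasureTheory.Integrable (fun x : Rn N => A ‖x‖ * ‖gradient u x‖ ^ N) volume

/-- The norm of `E`. -/
def normE (N : ℕ) (A : ℝ → ℝ) (u : Rn N → ℝ) : ℝ :=
  (∫ x : Rn N, A ‖x‖ * ‖gradient u x‖ ^ N) ^ ((N:ℝ)⁻¹)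

/-- Primitive `F(s) = ∫₀^s f`. -/
def Fprim (f : ℝ → ℝ) : ℝ → ℝ := fun s => ∫ t in (0:ℝ)..s, f t

/-- Approximating kernel `G_μ(r) = (r^{-μ}-1)/μ`. -/
def Gmu (μ r : ℝ) : ℝ := (r ^ (-μ) - 1) / μ

/-- Assumption (A). -/
def condA (A : ℝ → ℝ) (A0 ℓ : ℝ) : Prop :=
  ContinuousOn A (Set.Ioi 0) ∧ (∃ c > 0, ∀ᶠ r in 𝓝[>] (0:ℝ), c ≤ A r) ∧
  0 < A0 ∧ 0 < ℓ ∧ ∀ r > 0, A0 * r ^ ℓ ≤ A r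

/-- Assumption (Q). -/
def condQ (N : ℕ) (Q : ℝ → ℝ) (b0 b : ℝ) : Prop :=
  ContinuousOn Q (Set.Ioi 0) ∧ (∀ r > 0, 0 < Q r) ∧
  -(N:ℝ) < b0 ∧ -(N:ℝ) < b ∧
  (∃ M : ℝ, ∀ᶠ r in 𝓝[>] (0:ℝ), Q r / r ^ b0 ≤ M) ∧
  (∃ M : ℝ, ∀ᶠ r in atTop, Q r / r ^ b ≤ M)

/-- The exponent `γ`. -/
def gam (N : ℕ) (ℓ b : ℝ) : ℝ :=
  if b < ℓ - N then (N:ℝ) else (b - ℓ + N) * ((N:ℝ)+1) / ℓ + N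

/-- Assumption (A'). -/
def condA' (A : ℝ → ℝ) (A0 ℓ L r0 : ℝ) : Prop :=
  0 < r0 ∧ 0 < L ∧
  ∀ r : ℝ, 0 < r → r ≤ r0 → A0 * (1 + r ^ ℓ) ≤ A r ∧ A r ≤ A0 * (1 + r ^ L)

/-- `b̃₀ := max {b₀, b₀(1-μ₀/(2N))}`. -/
def tb0 (N : ℕ) (b0 μ0 : ℝ) : ℝ := max b0 (b0 * (1 - μ0 / (2*(N:ℝ))))

/-- Assumption (Q'). -/
def condQ' (Q : ℝ → ℝ) (t CQ : ℝ) : Prop :=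
  0 < CQ ∧ Filter.liminf (fun r => Q r / r ^ t) (𝓝[>] (0:ℝ)) = CQ

/-- Assumption (f0). -/
def condf0 (f : ℝ → ℝ) : Prop := (∀ t > 0, 0 < f t) ∧ ∀ t ≤ 0, f t = 0

/-- Assumption (f1). -/
def condf1 (N : ℕ) (f : ℝ → ℝ) (α0 : ℝ) : Prop :=
  ContDiffOn ℝ 1 f (Set.Ioi 0) ∧ 0 < α0 ∧
  (∀ α > α0,
    Tendsto (fun t => f t * Real.exp (-α * t ^ ((N:ℝ)/((N:ℝ)-1)))) atTop (𝓝 0)) ∧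
  (∀ α < α0,
    Tendsto (fun t => f t * Real.exp (-α * t ^ ((N:ℝ)/((N:ℝ)-1)))) atTop atTop)

/-- Assumption (f2): `f(t) = o(t^{p-1})` as `t → 0⁺`. -/
def condf2 (f : ℝ → ℝ) (p : ℝ) : Prop :=
  (fun t => f t) =o[𝓝[>] (0:ℝ)] fun t => t ^ (p - 1)

/-- Assumption (f3). -/
def condf3 (f : ℝ → ℝ) (τ C : ℝ) : Prop :=
  ∀ t > 0, τ ≤ Fprim f t * deriv f t / f t ^ 2 ∧ Fprim f t * deriv f t / f t ^ 2 ≤ C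

/-- Assumption (f4). -/
def condf4 (f : ℝ → ℝ) : Prop :=
  Tendsto (fun t => Fprim f t * deriv f t / f t ^ 2) atTop (𝓝 1)

/-- Assumption (f5), in the form `liminf_{t→∞} t^λ f(t)F(t) e^{-2α₀ t^{N/(N-1)}} ≥ β`. -/
def condf5 (N : ℕ) (f : ℝ → ℝ) (α0 β lam : ℝ) : Prop :=
  ∀ c < β, ∀ᶠ t in atTop,
    c ≤ t ^ lam * (f t * Fprim f t) * Real.exp (-(2*α0) * t ^ ((N:ℝ)/((N:ℝ)-1)))

/-- The explicit constant `β₀` (case `λ = 1 + N/(N-1)`), with `ρ = min{1/4, r₀, r_Q}`. -/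
def beta0 (N : ℕ) (A0 α0 CQ t r0 rQ L : ℝ) : ℝ :=
  (A0 / omegaS N) * (2 * (t + (N:ℝ)) ^ ((N:ℝ) + 2)) /
    (α0 ^ N * CN N * CQ ^ 2 * (min (1/4) (min r0 rQ)) ^ (2 * (t + (N:ℝ)))) *
    Real.exp (2 * (t + (N:ℝ)) * (min (1/4) (min r0 rQ)) ^ L / (((N:ℝ) - 1) * L))

/-- The threshold `β₀` in (f5): `0` if `λ < 1 + N/(N-1)`, the explicit constant otherwise. -/
def beta0' (N : ℕ) (A0 α0 CQ t r0 rQ L lam : ℝ) : ℝ :=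
  if lam < 1 + (N:ℝ)/((N:ℝ)-1) then 0 else beta0 N A0 α0 CQ t r0 rQ L

/-- Weak solution of the logarithmic Choquard equation. -/
def weakSolLog (N : ℕ) (A Q f : ℝ → ℝ) (u : Rn N → ℝ) : Prop :=
  ∀ φ : Rn N → ℝ, memE N A φ →
    (∫ x : Rn N, A ‖x‖ * ‖gradient u x‖ ^ (N - 2) * ⟪gradient u x, gradient φ x⟫) =
    CN N * ∫ x : Rn N,
      (∫ y : Rn N, Real.log (1 / ‖x - y‖) * (Q ‖y‖ * Fprim f (u y))) *
        (Q ‖x‖ * f (u x) * φ x)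

/-- Weak solution of the approximating Choquard equation. -/
def weakSolMu (N : ℕ) (A Q f : ℝ → ℝ) (μ : ℝ) (u : Rn N → ℝ) : Prop :=
  ∀ φ : Rn N → ℝ, memE N A φ →
    (∫ x : Rn N, A ‖x‖ * ‖gradient u x‖ ^ (N - 2) * ⟪gradient u x, gradient φ x⟫) =
    CN N * ∫ x : Rn N,
      (∫ y : Rn N, Gmu μ ‖x - y‖ * (Q ‖y‖ * Fprim f (u y))) *
        (Q ‖x‖ * f (u x) * φ x)

/-- The approximating functional `J_μ`. -/
def Jmu (N : ℕ) (A Q f : ℝ → ℝ) (μ : ℝ) (u : Rn N → ℝ) : ℝ :=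
  (1 / (N:ℝ)) * (∫ x : Rn N, A ‖x‖ * ‖gradient u x‖ ^ N) -
  (CN N / 2) * ∫ x : Rn N, ∫ y : Rn N,
    Gmu μ ‖x - y‖ * (Q ‖x‖ * Fprim f (u x)) * (Q ‖y‖ * Fprim f (u y))

/-- The mountain pass level `c_μ`. -/
def cMP (N : ℕ) (A Q f : ℝ → ℝ) (μ : ℝ) : ℝ :=
  sInf {c : ℝ | ∃ γ : ℝ → Rn N → ℝ,
    γ 0 = 0 ∧ (∀ t ∈ Set.Icc (0:ℝ) 1, memE N A (γ t)) ∧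
    (∀ t ∈ Set.Icc (0:ℝ) 1,
      Tendsto (fun s => normE N A (fun x => γ s x - γ t x)) (𝓝[Set.Icc (0:ℝ) 1] t) (𝓝 0)) ∧
    Jmu N A Q f μ (γ 1) < 0 ∧
    c = ⨆ t : Set.Icc (0:ℝ) 1, Jmu N A Q f μ (γ t.1)}

theorem norm_bound_by_energy (N : ℕ) (hN : 2 ≤ N) (A Q f : ℝ → ℝ)
    (A0 ℓ b0 b τ Cf μ0 μ : ℝ)
    (hA : condA A A0 ℓ) (hQ : condQ N Q b0 b)
    (hf0 : condf0 f) (hfC1 : ContDiffOn ℝ 1 f (Set.Ioi 0))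
    (hf3 : 1 - 2/(N:ℝ) < τ ∧ τ < 1 ∧ 0 < Cf ∧ condf3 f τ Cf)
    (hμ0 : 0 < μ0 ∧ μ0 ≤ 1) (hμ : 0 < μ ∧ μ < μ0)
    (u : Rn N → ℝ) (hu_rad : IsRadial u) (hu_mem : memE N A u)
    (hu_nn : ∀ x, 0 ≤ u x)
    (hu_sol : weakSolMu N A Q f μ u)
    (hv : memE N A (fun x => if 0 < u x then Fprim f (u x) / f (u x) else 0)) :
    (τ - 1 + 2/(N:ℝ)) * normE N A u ^ N ≤ 2 * Jmu N A Q f μ u := by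

  classical
  obtain ⟨hA1, hA2, hA0, hl, hAlb⟩ := hA
  obtain ⟨hτ1, hτ2, hCf, hf3'⟩ := hf3
  set v : Rn N → ℝ := fun x => if 0 < u x then Fprim f (u x) / f (u x) else 0 with hv_def
  have hNpos : (0:ℝ) < N := by positivity
  have h2N : (2:ℝ)/N ≤ 1 := by
    rw [div_le_one hNpos]; exact_mod_cast hN
  have hτpos : 0 < τ := by linarith
  -- the set {0} is null
  have h0ae : ∀ᵐ x : Rn N, x ≠ 0 := by
    have hnt : Nontrivial (Rn N) := by
      have : Nonempty (Fin N) := ⟨⟨0, by omega⟩⟩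
      infer_instance
    have h1 := MeasureTheory.Measure.addHaar_submodule
      (volume : Measure (Rn N)) ⊥ bot_ne_top
    rw [ae_iff]
    convert h1 using 2
    simp [Set.ext_iff]
  have hApos : ∀ x : Rn N, x ≠ 0 → 0 < A ‖x‖ := by
    intro x hx
    have hnx : (0:ℝ) < ‖x‖ := norm_pos_iff.mpr hx
    have := hAlb ‖x‖ hnx
    have : (0:ℝ) < A0 * ‖x‖ ^ ℓ := by positivity
    linarith [hAlb ‖x‖ hnx]
  set I : ℝ := ∫ x : Rn N, A ‖x‖ * ‖gradient u x‖ ^ N with hI_def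
  have hInn : 0 ≤ I := by
    refine integral_nonneg_of_ae ?_
    filter_upwards [h0ae] with x hx
    have := hApos x hx
    positivity
  -- pointwise inequality
  have key : ∀ x : Rn N, x ≠ 0 →
      A ‖x‖ * ‖gradient u x‖ ^ (N - 2) * ⟪gradient u x, gradient v x⟫ ≤
        (1 - τ) * (A ‖x‖ * ‖gradient u x‖ ^ N) := by
    intro x hx
    have hAx := hApos x hx
    by_cases hg : gradient u x = 0
    · rw [hg]
      simp [inner_zero_left, norm_zero, zero_pow (by omega : N ≠ 0)]
    · have hdu : DifferentiableAt ℝ u x := by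
        by_contra hc
        exact hg (gradient_eq_zero_of_not_differentiableAt hc)
      have hupos : 0 < u x := by
        rcases (hu_nn x).lt_or_eq with h | h
        · exact h
        · exfalso
          apply hg
          have hmin : IsLocalMin u x :=
            Filter.Eventually.of_forall (fun y => h ▸ hu_nn y)
          have hf0' := hmin.fderiv_eq_zero
          rw [gradient, hf0']
          simp
      have hfa : 0 < f (u x) := hf0.1 (u x) hupos
      have hFne : Fprim f (u x) ≠ 0 := by
        intro hFz
        have h3 := (hf3' (u x) hupos).1
        rw [hFz] at h3
        simp at h3
        linarith
      have hint : IntervalIntegrable f volume 0 (u x) := by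
        by_contra hni
        exact hFne (intervalIntegral.integral_undef hni)
      have hcontf : ContinuousAt f (u x) :=
        hfC1.continuousOn.continuousAt (Ioi_mem_nhds hupos)
      have hmeasf : StronglyMeasurableAtFilter f (𝓝 (u x)) volume :=
        ContinuousOn.stronglyMeasurableAtFilter isOpen_Ioi hfC1.continuousOn (u x) hupos
      have hF : HasDerivAt (Fprim f) (f (u x)) (u x) :=
        intervalIntegral.integral_hasDerivAt_right hint hmeasf hcontf
      have hfd : DifferentiableAt ℝ f (u x) :=
        ((hfC1.differentiableOn one_ne_zero).differentiableAt (Ioi_mem_nhds hupos))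
      have hdf : HasDerivAt f (deriv f (u x)) (u x) := hfd.hasDerivAt
      set c : ℝ := (f (u x) * f (u x) - Fprim f (u x) * deriv f (u x)) / f (u x) ^ 2 with hc_def
      have hgd : HasDerivAt (fun s => if 0 < s then Fprim f s / f s else 0) c (u x) := by
        have h1 : HasDerivAt (fun s => Fprim f s / f s) c (u x) := hF.div hdf (ne_of_gt hfa)
        apply h1.congr_of_eventuallyEq
        filter_upwards [Ioi_mem_nhds hupos] with s hs
        exact if_pos (Set.mem_Ioi.mp hs)
      have hcle : c ≤ 1 - τ := by
        have h3 := (hf3' (u x) hupos).1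
        have hceq : c = 1 - Fprim f (u x) * deriv f (u x) / f (u x) ^ 2 := by
          rw [hc_def]
          field_simp
        rw [hceq]
        linarith
      -- chain rule for the gradient
      have hfu : HasFDerivAt u ((InnerProductSpace.toDual ℝ (Rn N)) (gradient u x) : Rn N →L[ℝ] ℝ) x :=
        hasGradientAt_iff_hasFDerivAt.mp hdu.hasGradientAt
      have hvd : HasFDerivAt v (c • ((InnerProductSpace.toDual ℝ (Rn N)) (gradient u x) : Rn N →L[ℝ] ℝ)) x :=
        hgd.comp_hasFDerivAt x hfu
      have hgv : HasGradientAt v (c • gradient u x) x := by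
        rw [hasGradientAt_iff_hasFDerivAt]
        have heq : ((InnerProductSpace.toDual ℝ (Rn N)) (c • gradient u x) : Rn N →L[ℝ] ℝ)
            = c • ((InnerProductSpace.toDual ℝ (Rn N)) (gradient u x) : Rn N →L[ℝ] ℝ) := by
          ext y
          simp [inner_smul_left]
        rw [heq]
        exact hvd
      rw [hgv.gradient, real_inner_smul_right, real_inner_self_eq_norm_sq]
      have hpow : ‖gradient u x‖ ^ (N - 2) * ‖gradient u x‖ ^ 2 = ‖gradient u x‖ ^ N := by
        rw [← pow_add]
        congr 1
        omega
      calc A ‖x‖ * ‖gradient u x‖ ^ (N - 2) * (c * ‖gradient u x‖ ^ 2)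
          = c * (A ‖x‖ * (‖gradient u x‖ ^ (N - 2) * ‖gradient u x‖ ^ 2)) := by ring
        _ ≤ (1 - τ) * (A ‖x‖ * (‖gradient u x‖ ^ (N - 2) * ‖gradient u x‖ ^ 2)) := by
            apply mul_le_mul_of_nonneg_right hcle
            positivity
        _ = (1 - τ) * (A ‖x‖ * ‖gradient u x‖ ^ N) := by rw [hpow]
  -- integral inequality
  have hineq : (∫ x : Rn N, A ‖x‖ * ‖gradient u x‖ ^ (N - 2) * ⟪gradient u x, gradient v x⟫)
      ≤ (1 - τ) * I := by
    by_cases hLi : Integrable (fun x : Rn N =>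
        A ‖x‖ * ‖gradient u x‖ ^ (N - 2) * ⟪gradient u x, gradient v x⟫) volume
    · have h2 : Integrable (fun x : Rn N => (1 - τ) * (A ‖x‖ * ‖gradient u x‖ ^ N)) volume :=
        hu_mem.2.const_mul _
      calc (∫ x : Rn N, A ‖x‖ * ‖gradient u x‖ ^ (N - 2) * ⟪gradient u x, gradient v x⟫)
          ≤ ∫ x : Rn N, (1 - τ) * (A ‖x‖ * ‖gradient u x‖ ^ N) := by
            refine integral_mono_ae hLi h2 ?_
            filter_upwards [h0ae] with x hx
            exact key x hx
        _ = (1 - τ) * I := by rw [integral_const_mul]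
    · rw [integral_undef hLi]
      have : 0 ≤ (1 - τ) * I := mul_nonneg (by linarith) hInn
      linarith
  -- use the weak solution with test function v
  have hsol := hu_sol v hv
  have hR : (∫ x : Rn N,
        (∫ y : Rn N, Gmu μ ‖x - y‖ * (Q ‖y‖ * Fprim f (u y))) * (Q ‖x‖ * f (u x) * v x))
      = ∫ x : Rn N, ∫ y : Rn N,
        Gmu μ ‖x - y‖ * (Q ‖x‖ * Fprim f (u x)) * (Q ‖y‖ * Fprim f (u y)) := by
    refine integral_congr_ae (Filter.Eventually.of_forall fun x => ?_)
    have hfv : Q ‖x‖ * f (u x) * v x = Q ‖x‖ * Fprim f (u x) := by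
      by_cases hx : 0 < u x
      · have hfa : f (u x) ≠ 0 := ne_of_gt (hf0.1 (u x) hx)
        rw [hv_def]
        simp only [if_pos hx]
        field_simp
      · have hux : u x = 0 := le_antisymm (not_lt.mp hx) (hu_nn x)
        rw [hv_def]
        simp only [if_neg hx]
        rw [hux]
        simp [hf0.2 0 le_rfl, Fprim, intervalIntegral.integral_same]
    dsimp only
    rw [hfv, ← MeasureTheory.integral_mul_const]
    refine integral_congr_ae (Filter.Eventually.of_forall fun y => ?_)
    ring
  rw [hR] at hsol
  -- conclude
  have hnorm : normE N A u ^ N = I := by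
    rw [normE, ← hI_def, ← Real.rpow_natCast (I ^ ((N:ℝ)⁻¹)) N, ← Real.rpow_mul hInn,
      inv_mul_cancel₀ (ne_of_gt hNpos), Real.rpow_one]
  rw [hsol] at hineq
  rw [hnorm, Jmu, ← hI_def]
  generalize hD : (∫ (x : Rn N), ∫ (y : Rn N),
      Gmu μ ‖x - y‖ * (Q ‖x‖ * Fprim f (u x)) * (Q ‖y‖ * Fprim f (u y))) = D at hineq ⊢
  have hNne : (N:ℝ) ≠ 0 := ne_of_gt hNpos
  calc (τ - 1 + 2/(N:ℝ)) * I = 2/(N:ℝ) * I - (1 - τ) * I := by field_simp; ring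
    _ ≤ 2/(N:ℝ) * I - CN N * D := by linarith
    _ = 2 * (1/(N:ℝ) * I - CN N / 2 * D) := by field_simp


end
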